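/- Let N(v) = Σ_{j∈J} m_j·|D(v,w_j)| be a norm of Culler–Shalen type on ℝ², assume there exist j, k ∈ J with D(w_j,w_k) ≠ 0, and let α, β ∈ ℤ² be linearly independent. If c is a real number with N(β) ≤ c, then there exists j ∈ J with N(α)·|D(β,w_j)| ≤ c·|D(α,w_j)|. -/
import Mathlib


/-- `D(v,w) = v₁w₂ − v₂w₁` for `v, w ∈ ℝ²`. -/
noncomputable def Dd (v w : ℝ × ℝ) : ℝ := v.1 * w.2 - v.2 * w.1

/-- Inclusion of the lattice `ℤ²` into `ℝ²`. -/
def toR (w : ℤ × ℤ) : ℝ × ℝ := ((w.1 : ℝ), (w.2 : ℝ))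

/-- For a norm of Culler–Shalen type `N(v) = Σ_j m_j·|D(v,w_j)|`
(with some `D(w_j,w_k) ≠ 0`) and linearly independent `α, β ∈ ℤ²`, if `N(β) ≤ c`
then there is `j ∈ J` with `N(α)·|D(β,w_j)| ≤ c·|D(α,w_j)|`. -/
theorem boundary_class_of_norm_bound
    {J : Type*} [Fintype J] [Nonempty J]
    (m : J → ℝ) (hm : ∀ j, 0 < m j)
    (w : J → ℤ × ℤ) (hw : ∀ j, Int.gcd (w j).1 (w j).2 = 1)
    (hnorm : ∃ j k, Dd (toR (w j)) (toR (w k)) ≠ 0)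
    (α β : ℤ × ℤ) (hind : Dd (toR α) (toR β) ≠ 0)
    (N : (ℝ × ℝ) → ℝ) (hN : ∀ v, N v = ∑ j, m j * |Dd v (toR (w j))|)
    (c : ℝ) (hc : N (toR β) ≤ c) :
    ∃ j, N (toR α) * |Dd (toR β) (toR (w j))| ≤ c * |Dd (toR α) (toR (w j))| := by
  by_contra hcon
  push_neg at hcon
  -- N(α) > 0
  have hge : 0 ≤ N (toR α) := by
    rw [hN]
    exact Finset.sum_nonneg fun j _ => mul_nonneg (hm j).le (abs_nonneg _)
  have hne : N (toR α) ≠ 0 := by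
    intro h0
    have hall : ∀ j, Dd (toR α) (toR (w j)) = 0 := by
      intro j
      have := (Finset.sum_eq_zero_iff_of_nonneg
        (fun j _ => mul_nonneg (hm j).le (abs_nonneg _))).mp ((hN (toR α)).symm.trans h0)
        j (Finset.mem_univ j)
      have := (mul_eq_zero.mp this).resolve_left (hm j).ne'
      exact abs_eq_zero.mp this
    obtain ⟨j, k, hjk⟩ := hnorm
    have h1 := hall j
    have h2 := hall k
    apply hjk
    have e1 : (α.1 : ℝ) * Dd (toR (w j)) (toR (w k)) =
        Dd (toR α) (toR (w k)) * (w j).1 - Dd (toR α) (toR (w j)) * (w k).1 := by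
      simp only [Dd, toR]; ring
    have e2 : (α.2 : ℝ) * Dd (toR (w j)) (toR (w k)) =
        Dd (toR α) (toR (w k)) * (w j).2 - Dd (toR α) (toR (w j)) * (w k).2 := by
      simp only [Dd, toR]; ring
    rw [h1, h2] at e1 e2
    simp only [zero_mul, sub_zero] at e1 e2
    by_contra hD
    have ha1 : (α.1 : ℝ) = 0 := by
      by_contra h; exact hD ((mul_eq_zero.mp e1).resolve_left h)
    have ha2 : (α.2 : ℝ) = 0 := by
      by_contra h; exact hD ((mul_eq_zero.mp e2).resolve_left h)
    apply hind
    simp only [Dd, toR, ha1, ha2]; ring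
  have hA : 0 < N (toR α) := hge.lt_of_ne' hne
  -- strict sum inequality
  have hsum : c * N (toR α) < N (toR α) * N (toR β) := by
    have : ∑ j, m j * (c * |Dd (toR α) (toR (w j))|) <
        ∑ j, m j * (N (toR α) * |Dd (toR β) (toR (w j))|) := by
      apply Finset.sum_lt_sum_of_nonempty Finset.univ_nonempty
      intro j _
      exact mul_lt_mul_of_pos_left (hcon j) (hm j)
    calc c * N (toR α) = ∑ j, m j * (c * |Dd (toR α) (toR (w j))|) := by
          rw [hN, Finset.mul_sum]; apply Finset.sum_congr rfl; intro j _; ring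
      _ < ∑ j, m j * (N (toR α) * |Dd (toR β) (toR (w j))|) := this
      _ = N (toR α) * N (toR β) := by
          rw [hN (toR β), Finset.mul_sum]; apply Finset.sum_congr rfl; intro j _; ring
  have : N (toR α) * N (toR β) ≤ N (toR α) * c := mul_le_mul_of_nonneg_left hc hA.le
  nlinarith
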